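/- Let ω be a non-negative integrable function on the interval (a,b) with ∫_a^b ω(y) dy = 1 and with y^k ω(y) integrable on (a,b) for every k ≥ 0, and let L_ω[f] = ∫_a^b f(y) ω(y) dy. Let (P_n)_{n≥0} be a sequence of real polynomials with deg P_n = n that is orthogonal with respect to the functional L_{yω}[f] = ∫_a^b f(y)·y·ω(y) dy (i.e., L_{yω}[P_n P_m] = 0 for n ≠ m and L_{yω}[P_n^2] ≠ 0 for all n) and satisfies L_ω[P_n] = 1 for all n. Then ∫_a^b P_n(y) P_n(x + y) ω(y) dy = P_n(x) for all real x and every n. -/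

import Mathlib

open MeasureTheory Set

/-- Special case `ζ = 0, τ = 1, σ = 0` of Theorem 3 (the Bender–Ben-Naim equation
`∫ P(y) P(x+y) ω(y) dy = P(x)`): an OPS for `L_{yω}` normalized by `L_ω[Pₙ] = 1`
solves `∫ Pₙ(y) Pₙ(x+y) ω(y) dy = Pₙ(x)`. -/
theorem OPS_solves_additive_integral_eq (a b : ℝ) (ω : ℝ → ℝ)
    (hω_nonneg : ∀ y ∈ Ioo a b, 0 ≤ ω y)
    (hω_int : IntegrableOn ω (Ioo a b))
    (hω_norm : (∫ y in Ioo a b, ω y) = 1)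
    (h_moments : ∀ k : ℕ, IntegrableOn (fun y => y ^ k * ω y) (Ioo a b))
    (P : ℕ → Polynomial ℝ)
    (hdeg : ∀ n, (P n).natDegree = n)
    (horth : ∀ n m, n ≠ m →
      (∫ y in Ioo a b, (P n).eval y * (P m).eval y * y * ω y) = 0)
    (hne : ∀ n, (∫ y in Ioo a b, ((P n).eval y) ^ 2 * y * ω y) ≠ 0)
    (hnorm : ∀ n, (∫ y in Ioo a b, (P n).eval y * ω y) = 1) :
    ∀ (n : ℕ) (x : ℝ),
      (∫ y in Ioo a b, (P n).eval y * (P n).eval (x + y) * ω y) = (P n).eval x := by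
  classical
  -- any polynomial times ω is integrable
  have polyInt : ∀ Q : Polynomial ℝ, IntegrableOn (fun y => Q.eval y * ω y) (Ioo a b) := by
    intro Q
    induction Q using Polynomial.induction_on' with
    | add p q hp hq =>
        have := hp.add hq
        simpa [Polynomial.eval_add, add_mul, Pi.add_def] using this
    | monomial k c =>
        have := (h_moments k).const_mul c
        simpa [Polynomial.eval_monomial, mul_assoc, IntegrableOn] using this
  set L : Polynomial ℝ → ℝ := fun Q => ∫ y in Ioo a b, Q.eval y * ω y with hL
  have Ladd : ∀ Q R : Polynomial ℝ, L (Q + R) = L Q + L R := by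
    intro Q R
    have := integral_add (polyInt Q) (polyInt R)
    simpa [hL, Polynomial.eval_add, add_mul] using this
  have Lsmul : ∀ (c : ℝ) (Q : Polynomial ℝ), L (Polynomial.C c * Q) = c * L Q := by
    intro c Q
    simp only [hL]
    rw [← integral_const_mul]
    apply integral_congr_ae
    filter_upwards with y
    simp [mul_assoc]
  have horth' : ∀ n m, n ≠ m → L (P n * P m * Polynomial.X) = 0 := by
    intro n m h
    rw [hL, ← horth n m h]
    apply integral_congr_ae
    filter_upwards with y
    simp [mul_assoc]
  have hPne : ∀ j, P j ≠ 0 := by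
    intro j hj
    exact hne j (by simp [hj])
  -- orthogonality against all polynomials of lower degree
  have key : ∀ (d : ℕ) (n : ℕ) (R : Polynomial ℝ), R.natDegree < d →
      R.degree < (n : WithBot ℕ) → L (P n * R * Polynomial.X) = 0 := by
    intro d
    induction d with
    | zero => intro n R h _; exact absurd h (Nat.not_lt_zero _)
    | succ d ih =>
      intro n R hRd hRn
      by_cases hR0 : R = 0
      · simp [hR0, hL]
      · set m := R.natDegree with hm
        have hdm : R.degree = (m : WithBot ℕ) := Polynomial.degree_eq_natDegree hR0
        have hmn : m < n := by
          rw [hdm] at hRn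
          exact_mod_cast hRn
        have hlc : (P m).leadingCoeff ≠ 0 := Polynomial.leadingCoeff_ne_zero.mpr (hPne m)
        set c := R.leadingCoeff / (P m).leadingCoeff with hc
        have hcne : c ≠ 0 :=
          div_ne_zero (Polynomial.leadingCoeff_ne_zero.mpr hR0) hlc
        set R' := R - Polynomial.C c * P m with hR'
        have hdegPm : (P m).degree = (m : WithBot ℕ) := by
          rw [Polynomial.degree_eq_natDegree (hPne m), hdeg m]
        have hdegCP : (Polynomial.C c * P m).degree = R.degree := by
          rw [Polynomial.degree_C_mul hcne, hdegPm, hdm]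
        have hlcCP : (Polynomial.C c * P m).leadingCoeff = R.leadingCoeff := by
          rw [Polynomial.leadingCoeff_mul, Polynomial.leadingCoeff_C, hc,
            div_mul_cancel₀ _ hlc]
        have hsplit : P n * R * Polynomial.X
            = Polynomial.C c * (P n * P m * Polynomial.X) + P n * R' * Polynomial.X := by
          rw [hR']; ring
        by_cases hR'0 : R' = 0
        · rw [hsplit, hR'0, Ladd, Lsmul, horth' n m (Nat.ne_of_gt hmn)]
          simp [hL]
        · have hdR' : R'.degree < (m : WithBot ℕ) := by
            have := Polynomial.degree_sub_lt hdegCP.symm hR0 hlcCP.symm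
            rwa [hdm] at this
          have hndR' : R'.natDegree < m := (Polynomial.natDegree_lt_iff_degree_lt hR'0).mpr hdR'
          have hmd : m ≤ d := Nat.lt_succ_iff.mp hRd
          have h1 : R'.natDegree < d := lt_of_lt_of_le hndR' hmd
          have h2 : R'.degree < (n : WithBot ℕ) :=
            lt_trans hdR' (by exact_mod_cast hmn)
          rw [hsplit, Ladd, Lsmul, horth' n m (Nat.ne_of_gt hmn), ih n R' h1 h2]
          ring
  intro n x
  set Q := (P n).comp (Polynomial.X + Polynomial.C x) with hQ
  have hev : ∀ y : ℝ, Q.eval y = (P n).eval (x + y) := by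
    intro y
    simp [hQ, Polynomial.eval_comp, add_comm]
  have step1 : (∫ y in Ioo a b, (P n).eval y * (P n).eval (x + y) * ω y) = L (P n * Q) := by
    rw [hL]
    apply integral_congr_ae
    filter_upwards with y
    simp [Polynomial.eval_mul, hev y]
  have hQn : Q.natDegree = n := by
    rw [hQ, Polynomial.natDegree_comp]
    simp [hdeg n]
  have decomp : P n * Q
      = P n * Q.divX * Polynomial.X + Polynomial.C (Q.coeff 0) * P n := by
    conv_lhs => rw [← Polynomial.X_mul_divX_add Q]
    ring
  have hdivdeg : Q.divX.degree < (n : WithBot ℕ) := by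
    by_cases hQ0 : Q = 0
    · simp [hQ0]
    · have h1 := Polynomial.degree_divX_lt hQ0
      have h2 : Q.degree ≤ (n : WithBot ℕ) := by
        rw [← hQn]; exact Polynomial.degree_le_natDegree
      exact lt_of_lt_of_le h1 h2
  have hdivnat : Q.divX.natDegree < n + 1 := by
    by_cases h0 : Q.divX = 0
    · simp [h0]
    · have := (Polynomial.natDegree_lt_iff_degree_lt h0).mpr hdivdeg
      omega
  have hLPn : L (P n) = 1 := hnorm n
  calc (∫ y in Ioo a b, (P n).eval y * (P n).eval (x + y) * ω y)
      = L (P n * Q) := step1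
    _ = L (P n * Q.divX * Polynomial.X) + L (Polynomial.C (Q.coeff 0) * P n) := by
        rw [decomp, Ladd]
    _ = 0 + Q.coeff 0 * L (P n) := by
        rw [key (n + 1) n Q.divX hdivnat hdivdeg, Lsmul]
    _ = (P n).eval x := by
        rw [hLPn, Polynomial.coeff_zero_eq_eval_zero, hev 0]
        simp
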